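/- Ramanujan's formula: for a > 0 and ξ ∈ ℝ, ∫_{−∞}^{∞} e^{−iξs} |Γ(a + is)|² ds = √π · Γ(a)Γ(a + 1/2) · (cosh(ξ/2))^{−2a} = (2π/2^{2a}) Γ(2a) (cosh(ξ/2))^{−2a}. -/

import Mathlib

open Real Complex MeasureTheory

namespace RamanujanAux

open Set

/-- `|Γ(z)| ≤ Γ(Re z)` for `Re z > 0`. -/
lemma abs_Gamma_le {z : ℂ} (hz : 0 < z.re) :
    ‖Complex.Gamma z‖ ≤ Real.Gamma z.re := by
  rw [Complex.Gamma_eq_integral hz, Real.Gamma_eq_integral hz]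
  calc ‖Complex.GammaIntegral z‖
      ≤ ∫ x in Ioi (0:ℝ), ‖(Real.exp (-x) : ℂ) * (x:ℂ) ^ (z-1)‖ := by
        rw [Complex.GammaIntegral]
        exact norm_integral_le_integral_norm (fun x => (Real.exp (-x) : ℂ) * (x:ℂ) ^ (z-1))
    _ = ∫ x in Ioi (0:ℝ), Real.exp (-x) * x ^ (z.re - 1) := by
        refine setIntegral_congr_fun measurableSet_Ioi fun x hx => ?_
        rw [norm_mul, Complex.norm_real, Real.norm_eq_abs,
          abs_of_pos (Real.exp_pos _), Complex.norm_cpow_eq_rpow_re_of_pos hx, Complex.sub_re,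
          Complex.one_re]

lemma integrable_gammaPair (a : ℝ) (ha : 0 < a) :
    Integrable fun y : ℝ =>
      Complex.Gamma (a + y * Complex.I) * Complex.Gamma (a - y * Complex.I) := by
  have ha' : (a:ℝ) ≠ 0 := ne_of_gt ha
  have hcont : Continuous fun y : ℝ =>
      Complex.Gamma (a + y * Complex.I) * Complex.Gamma (a - y * Complex.I) := by
    have hG : ∀ (c : ℝ), Continuous fun y : ℝ => Complex.Gamma (a + c * y * Complex.I) := by
      intro c
      rw [continuous_iff_continuousAt]
      intro y
      have hne : ∀ m : ℕ, (a + c * y * Complex.I : ℂ) ≠ -m := by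
        intro m h
        have := congrArg Complex.re h
        simp at this
        have hm : (0:ℝ) ≤ m := Nat.cast_nonneg m
        linarith
      exact ContinuousAt.comp (Complex.differentiableAt_Gamma _ hne).continuousAt
        (by fun_prop : ContinuousAt (fun y : ℝ => (a + c * y * Complex.I : ℂ)) y)
    have h1 := hG 1
    have h2 := hG (-1)
    simp only [Complex.ofReal_neg, neg_mul] at h2
    have h2' : Continuous fun y : ℝ => Complex.Gamma (a - y * Complex.I) := by
      convert h2 using 2 with y
      push_cast
      ring
    have h1' : Continuous fun y : ℝ => Complex.Gamma (a + y * Complex.I) := by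
      convert h1 using 2 with y
      push_cast
      ring
    exact h1'.mul h2'
  have hmaj : Integrable fun y : ℝ =>
      Real.Gamma (a+1) ^ 2 * ((a^2)⁻¹ * (1 + (y/a)^2)⁻¹) :=
    ((integrable_inv_one_add_sq.comp_div ha').const_mul _).const_mul _
  refine hmaj.mono' hcont.aestronglyMeasurable (Filter.Eventually.of_forall fun y => ?_)
  have hsq : (0:ℝ) < a^2 + y^2 := by positivity
  set r : ℝ := Real.sqrt (a^2 + y^2) with hr
  have hr0 : 0 < r := Real.sqrt_pos.mpr hsq
  have hrr : r * r = a^2 + y^2 := Real.mul_self_sqrt hsq.le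
  have habs1 : ‖(a:ℂ) + y * Complex.I‖ = r := by
    rw [Complex.norm_add_mul_I]
  have habs2 : ‖(a:ℂ) - y * Complex.I‖ = r := by
    have : ((a:ℂ) - y * Complex.I) = (a:ℂ) + (-y) * Complex.I := by ring
    have h2 : ((-y)^2 : ℝ) = y^2 := by ring
    rw [this]
    rw [show ((a:ℂ) + -↑y * Complex.I) = ((a:ℂ) + ↑(-y) * Complex.I) by push_cast; ring]
    rw [Complex.norm_add_mul_I, h2, hr]
  -- bound each factor
  have key : ∀ z : ℂ, z.re = a → ‖Complex.Gamma z‖ ≤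
      Real.Gamma (a+1) / ‖z‖ := by
    intro z hz
    have hz0 : z ≠ 0 := by
      intro h; rw [h] at hz; simp at hz; exact ha.ne' hz.symm
    have h1 : Complex.Gamma z = Complex.Gamma (z+1) / z := by
      rw [Complex.Gamma_add_one z hz0]
      field_simp
    rw [h1, norm_div]
    have h2 : ‖Complex.Gamma (z+1)‖ ≤ Real.Gamma (a+1) := by
      have := RamanujanAux.abs_Gamma_le (z := z+1) (by simp [hz]; linarith)
      simpa [hz] using this
    have hzabs : 0 < ‖z‖ := by
      exact norm_pos_iff.mpr hz0
    exact (div_le_div_iff_of_pos_right hzabs).mpr h2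
  have b1 := key _ (by simp : ((a:ℂ) + y * Complex.I).re = a)
  have b2 := key _ (by simp : ((a:ℂ) - y * Complex.I).re = a)
  rw [habs1] at b1
  rw [habs2] at b2
  have hGnn : 0 ≤ Real.Gamma (a+1) := (Real.Gamma_pos_of_pos (by linarith)).le
  calc ‖Complex.Gamma (a + y * Complex.I) * Complex.Gamma (a - y * Complex.I)‖
      = ‖Complex.Gamma ((a:ℂ) + y * Complex.I)‖ *
        ‖Complex.Gamma ((a:ℂ) - y * Complex.I)‖ := by
        rw [norm_mul]
    _ ≤ (Real.Gamma (a+1) / r) * (Real.Gamma (a+1) / r) := by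
        apply mul_le_mul b1 b2 (by positivity) (by positivity)
    _ = Real.Gamma (a+1) ^ 2 * ((a^2)⁻¹ * (1 + (y/a)^2)⁻¹) := by
        rw [div_mul_div_comm, hrr]
        rw [show Real.Gamma (a+1) * Real.Gamma (a+1) = Real.Gamma (a+1)^2 by ring]
        congr 1
        rw [← mul_inv]
        congr 1
        field_simp

/-- The function whose Mellin transform is `Γ(s)Γ(2a-s)/Γ(2a)`. -/
noncomputable def f (a : ℝ) : ℝ → ℂ := fun x => ((1 + x) ^ (-(2*a)) : ℝ)

lemma phi_image : (fun t : ℝ => t / (1 - t)) '' Ioo 0 1 = Ioi 0 := by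
  ext x
  constructor
  · rintro ⟨t, ⟨ht0, ht1⟩, rfl⟩
    exact div_pos ht0 (by linarith)
  · intro hx
    rw [mem_Ioi] at hx
    refine ⟨x / (1 + x), ⟨div_pos hx (by linarith), ?_⟩, ?_⟩
    · rw [div_lt_one (by linarith)]; linarith
    · have h1 : (1 : ℝ) + x ≠ 0 := by positivity
      field_simp
      ring

lemma phi_injOn : InjOn (fun t : ℝ => t / (1 - t)) (Ioo 0 1) := by
  intro t1 ⟨h10, h11⟩ t2 ⟨h20, h21⟩ h
  have d1 : (1:ℝ) - t1 ≠ 0 := by linarith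
  have d2 : (1:ℝ) - t2 ≠ 0 := by linarith
  field_simp at h
  linarith

lemma phi_deriv : ∀ t ∈ Ioo (0:ℝ) 1,
    HasDerivWithinAt (fun t : ℝ => t / (1 - t)) (((1 - t)^2)⁻¹) (Ioo 0 1) t := by
  intro t ⟨ht0, ht1⟩
  have d1 : (1:ℝ) - t ≠ 0 := by linarith
  have h := (hasDerivAt_id t).div ((hasDerivAt_id t).const_sub 1) d1
  simp only [one_mul, Pi.div_def, id_eq] at h
  refine h.hasDerivWithinAt.congr_deriv ?_
  ring

lemma pointwise (a : ℝ) (s : ℂ) {t : ℝ} (ht : t ∈ Ioo (0:ℝ) 1) :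
    |((1 - t)^2)⁻¹| • (((t / (1 - t) : ℝ) : ℂ) ^ (s - 1) • f a (t / (1 - t)))
      = (t : ℂ) ^ (s - 1) * (1 - (t : ℂ)) ^ (2*(a:ℂ) - s - 1) := by
  obtain ⟨ht0, ht1⟩ := ht
  have h1t : (0:ℝ) < 1 - t := by linarith
  have h1t' : (1:ℝ) - t ≠ 0 := ne_of_gt h1t
  have hw0 : ((1 - t : ℝ) : ℂ) ≠ 0 := by exact_mod_cast h1t'
  -- compute f a (t/(1-t))
  have hfval : f a (t / (1 - t)) = ((1 - t : ℝ) : ℂ) ^ (2*(a:ℂ)) := by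
    rw [f]
    have h2 : (1 : ℝ) + t / (1 - t) = (1 - t)⁻¹ := by field_simp; ring
    rw [h2, Real.inv_rpow h1t.le, ← Real.rpow_neg h1t.le, neg_neg,
      Complex.ofReal_cpow h1t.le]
    push_cast
    ring_nf
  -- split the cpow of the quotient
  have hq : ((t / (1 - t) : ℝ) : ℂ) ^ (s - 1)
      = (t : ℂ) ^ (s - 1) * (((1 - t : ℝ) : ℂ) ^ (s - 1))⁻¹ := by
    have : ((t / (1 - t) : ℝ) : ℂ) = ((t : ℝ) : ℂ) * (((1 - t : ℝ)⁻¹ : ℝ) : ℂ) := by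
      push_cast
      rw [div_eq_mul_inv]
    rw [this, Complex.mul_cpow_ofReal_nonneg ht0.le (inv_nonneg.mpr h1t.le)]
    congr 1
    rw [Complex.ofReal_inv, Complex.inv_cpow]
    rw [Complex.arg_ofReal_of_nonneg h1t.le]
    exact Ne.symm Real.pi_ne_zero
  rw [Complex.real_smul, smul_eq_mul, hq, hfval]
  rw [abs_of_pos (by positivity : (0:ℝ) < ((1-t)^2)⁻¹)]
  have e2 : ((((1 - t)^2)⁻¹ : ℝ) : ℂ) = ((((1 - t):ℝ):ℂ)^2)⁻¹ := by push_cast; ring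
  have e3 : (1 - (t:ℂ)) = ((1 - t : ℝ) : ℂ) := by push_cast; ring
  rw [e2, e3]
  have e1 : 2*(a:ℂ) - s - 1 = (-2) + (-(s-1) + 2*(a:ℂ)) := by ring
  rw [e1, Complex.cpow_add _ _ hw0, Complex.cpow_add _ _ hw0, Complex.cpow_neg,
    Complex.cpow_neg]
  have e4 : ((1 - t : ℝ) : ℂ) ^ (2:ℂ) = ((1 - t : ℝ) : ℂ)^(2:ℕ) := by
    rw [show (2:ℂ) = ((2:ℕ):ℂ) by norm_num, Complex.cpow_natCast]
  rw [e4]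
  ring

lemma Gamma_two_a_ne_zero (a : ℝ) (ha : 0 < a) : Complex.Gamma (2*(a:ℂ)) ≠ 0 := by
  apply Complex.Gamma_ne_zero
  intro m h
  have h2 := congrArg Complex.re h
  simp at h2
  have hm : (0:ℝ) ≤ m := Nat.cast_nonneg m
  linarith

lemma mellin_f (a : ℝ) (ha : 0 < a) (s : ℂ) (hs : 0 < s.re) (hs2 : s.re < 2*a) :
    mellin (f a) s
      = Complex.Gamma s * Complex.Gamma (2*(a:ℂ) - s) / Complex.Gamma (2*(a:ℂ)) := by
  have hGne := Gamma_two_a_ne_zero a ha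
  have hs' : 0 < (2*(a:ℂ) - s).re := by
    simp only [Complex.sub_re, Complex.mul_re, Complex.ofReal_re, Complex.ofReal_im]
    simp
    linarith
  have key := Complex.Gamma_mul_Gamma_eq_betaIntegral hs hs'
  rw [show s + (2*(a:ℂ) - s) = 2*(a:ℂ) by ring] at key
  have hbeta : Complex.betaIntegral s (2*(a:ℂ) - s) = mellin (f a) s := by
    rw [Complex.betaIntegral, mellin, ← phi_image,
      integral_image_eq_integral_abs_deriv_smul measurableSet_Ioo phi_deriv phi_injOn,
      intervalIntegral.integral_of_le zero_le_one,
      MeasureTheory.integral_Ioc_eq_integral_Ioo]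
    refine setIntegral_congr_fun measurableSet_Ioo fun t ht => ?_
    exact (pointwise a s ht).symm
  rw [eq_div_iff hGne, ← hbeta, key]
  ring

lemma mellinConv (a : ℝ) (ha : 0 < a) : MellinConvergent (f a) a := by
  rw [MellinConvergent, ← phi_image,
    integrableOn_image_iff_integrableOn_abs_deriv_smul measurableSet_Ioo phi_deriv phi_injOn]
  have hbc := Complex.betaIntegral_convergent (u := (a:ℂ)) (v := (a:ℂ)) (by simpa) (by simpa)
  have h2 : IntegrableOn (fun x : ℝ => (x:ℂ)^((a:ℂ)-1) * (1 - (x:ℂ))^((a:ℂ)-1))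
      (Ioo 0 1) :=
    ((intervalIntegrable_iff_integrableOn_Ioc_of_le zero_le_one).mp hbc).mono_set
      Ioo_subset_Ioc_self
  refine h2.congr_fun (fun t ht => ?_) measurableSet_Ioo
  have h := (pointwise a ((a:ℂ)) ht).symm
  rw [show 2*(a:ℂ) - (a:ℂ) - 1 = (a:ℂ) - 1 by ring] at h
  exact h

lemma vertInt (a : ℝ) (ha : 0 < a) : Complex.VerticalIntegrable (mellin (f a)) a := by
  have heq : (fun y : ℝ => mellin (f a) ((a:ℝ) + y * Complex.I))
      = fun y : ℝ => (Complex.Gamma ((a:ℂ) + y * Complex.I) *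
          Complex.Gamma ((a:ℂ) - y * Complex.I)) / Complex.Gamma (2*(a:ℂ)) := by
    funext y
    rw [mellin_f a ha _ (by simp [ha]) (by simp; linarith)]
    rw [show 2*(a:ℂ) - ((a:ℂ) + y * Complex.I) = (a:ℂ) - y * Complex.I by ring]
  show Integrable (fun y : ℝ => mellin (f a) ((a:ℝ) + (y:ℝ) * Complex.I)) volume
  rw [heq]
  exact (integrable_gammaPair a ha).div_const _

lemma dup (a : ℝ) : Real.sqrt π * Real.Gamma a * Real.Gamma (a + 1/2)
    = 2 * π / 2 ^ (2*a) * Real.Gamma (2*a) := by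
  rw [mul_assoc, Real.Gamma_mul_Gamma_add_half]
  have h1 : Real.sqrt π * Real.sqrt π = π := Real.mul_self_sqrt pi_nonneg
  have h2 : (2:ℝ) ^ (1 - 2*a) = 2 / 2 ^ (2*a) := by
    rw [Real.rpow_sub two_pos, Real.rpow_one]
  rw [h2]
  calc Real.sqrt π * (Real.Gamma (2*a) * (2 / 2^(2*a)) * Real.sqrt π)
      = (Real.sqrt π * Real.sqrt π) * (2 / 2^(2*a)) * Real.Gamma (2*a) := by ring
    _ = 2 * π / 2^(2*a) * Real.Gamma (2*a) := by rw [h1]; ring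

lemma prod_eq (a ξ : ℝ) : Real.exp (a*ξ) * (1 + Real.exp ξ) ^ (-(2*a))
    = (2:ℝ) ^ (-(2*a)) * Real.cosh (ξ/2) ^ (-(2*a)) := by
  have hE : (0:ℝ) < Real.exp ξ := Real.exp_pos ξ
  have hch : (0:ℝ) < Real.cosh (ξ/2) := Real.cosh_pos (ξ/2)
  have hc : (0:ℝ) < 2 * Real.cosh (ξ/2) := by linarith
  have h1 : Real.exp (ξ/2) * Real.exp (ξ/2) = Real.exp ξ := by
    rw [← Real.exp_add]; ring_nf
  have h2 : Real.exp (-(ξ/2)) * Real.exp (ξ/2) = 1 := by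
    rw [← Real.exp_add]; simp
  have hfact : (1:ℝ) + Real.exp ξ = (2 * Real.cosh (ξ/2)) * Real.exp (ξ/2) := by
    rw [Real.cosh_eq]
    linear_combination -h1 - h2
  rw [hfact, Real.mul_rpow hc.le (Real.exp_pos _).le,
    Real.mul_rpow (by norm_num) hch.le, ← Real.exp_mul]
  have h3 : Real.exp (a*ξ) * Real.exp (ξ/2 * -(2*a)) = 1 := by
    rw [← Real.exp_add, show a*ξ + ξ/2 * -(2*a) = 0 by ring, Real.exp_zero]
  linear_combination ((2:ℝ) ^ (-(2*a)) * Real.cosh (ξ/2) ^ (-(2*a))) * h3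

lemma real_final (a ξ : ℝ) :
    2 * π * Real.Gamma (2*a) * (Real.exp (a*ξ) * (1 + Real.exp ξ) ^ (-(2*a)))
      = Real.sqrt π * Real.Gamma a * Real.Gamma (a + 1/2) *
          Real.cosh (ξ/2) ^ (-(2*a)) := by
  rw [prod_eq, dup, Real.rpow_neg (by norm_num : (0:ℝ) ≤ 2)]
  ring

end RamanujanAux

theorem ramanujan_gamma_formula (a ξ : ℝ) (ha : 0 < a) :
    (∫ s : ℝ, Complex.exp (-Complex.I * ξ * s) *
        (Complex.Gamma (a + Complex.I * s) * Complex.Gamma (a - Complex.I * s)))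
      = ((Real.sqrt Real.pi * Real.Gamma a * Real.Gamma (a + 1 / 2) *
          (Real.cosh (ξ / 2)) ^ (-(2 * a)) : ℝ) : ℂ) ∧
    (Real.sqrt Real.pi * Real.Gamma a * Real.Gamma (a + 1 / 2) *
        (Real.cosh (ξ / 2)) ^ (-(2 * a)) : ℝ)
      = (2 * Real.pi / 2 ^ (2 * a)) * Real.Gamma (2 * a) *
          (Real.cosh (ξ / 2)) ^ (-(2 * a)) := by
  constructor
  · -- the integral formula
    have hx : (0:ℝ) < Real.exp ξ := Real.exp_pos ξ
    have hGne := RamanujanAux.Gamma_two_a_ne_zero a ha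
    have hca : ContinuousAt (RamanujanAux.f a) (Real.exp ξ) := by
      have hb : ContinuousAt (fun t : ℝ => t ^ (-(2*a))) (1 + Real.exp ξ) :=
        Real.continuousAt_rpow_const _ _ (Or.inl (by positivity))
      have h1 : ContinuousAt (fun t : ℝ => (1 + t) ^ (-(2*a))) (Real.exp ξ) :=
        hb.comp ((continuous_const.add continuous_id).continuousAt)
      exact Complex.continuous_ofReal.continuousAt.comp h1
    have hinv := mellinInv_mellin_eq a (RamanujanAux.f a) hx (RamanujanAux.mellinConv a ha)
      (RamanujanAux.vertInt a ha) hca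
    rw [mellinInv] at hinv
    have hptw : ∀ y : ℝ, ((Real.exp ξ : ℝ) : ℂ) ^ (-((a:ℂ) + y * Complex.I)) •
          mellin (RamanujanAux.f a) ((a:ℂ) + y * Complex.I)
        = (Complex.exp (-((a:ℂ) * (ξ:ℂ))) / Complex.Gamma (2*(a:ℂ))) *
            (Complex.exp (-Complex.I * ξ * y) *
              (Complex.Gamma ((a:ℂ) + Complex.I * y) *
                Complex.Gamma ((a:ℂ) - Complex.I * y))) := by
      intro y
      rw [RamanujanAux.mellin_f a ha _ (by simp [ha]) (by simp; linarith)]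
      rw [show 2*(a:ℂ) - ((a:ℂ) + y * Complex.I) = (a:ℂ) - Complex.I * y by ring]
      rw [show ((a:ℂ) + (y:ℂ) * Complex.I) = (a:ℂ) + Complex.I * y by ring]
      rw [Complex.ofReal_exp, Complex.cpow_def_of_ne_zero (Complex.exp_ne_zero _),
        Complex.log_exp (by simpa using Real.pi_pos) (by simpa using Real.pi_nonneg)]
      rw [show ((ξ:ℂ) * -((a:ℂ) + Complex.I * y))
          = (-((a:ℂ) * (ξ:ℂ))) + (-Complex.I * ξ * y) by ring, Complex.exp_add,
        smul_eq_mul]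
      ring
    simp only [hptw] at hinv
    rw [integral_const_mul, Complex.real_smul] at hinv
    set T := ∫ s : ℝ, Complex.exp (-Complex.I * ξ * s) *
        (Complex.Gamma (a + Complex.I * s) * Complex.Gamma (a - Complex.I * s)) with hT
    have hE : Complex.exp ((a:ℂ) * (ξ:ℂ)) * Complex.exp (-((a:ℂ) * (ξ:ℂ))) = 1 := by
      rw [← Complex.exp_add]
      simp
    have h2π : (2*(π:ℂ)) ≠ 0 := by
      simp [Real.pi_ne_zero]
    have hstep : Complex.exp (-((a:ℂ) * (ξ:ℂ))) * T
        = RamanujanAux.f a (Real.exp ξ) * (2*(π:ℂ) * Complex.Gamma (2*(a:ℂ))) := by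
      rw [← hinv]
      push_cast
      field_simp
      rw [mul_div_cancel_right₀ _ (by rwa [mul_comm] at hGne)]
    have hrhs : ((Real.sqrt Real.pi * Real.Gamma a * Real.Gamma (a + 1 / 2) *
          (Real.cosh (ξ / 2)) ^ (-(2 * a)) : ℝ) : ℂ)
        = 2*(π:ℂ) * Complex.Gamma (2*(a:ℂ)) * Complex.exp ((a:ℂ) * (ξ:ℂ)) *
            RamanujanAux.f a (Real.exp ξ) := by
      rw [← RamanujanAux.real_final a ξ, RamanujanAux.f]
      push_cast [← Complex.Gamma_ofReal]
      ring
    rw [hrhs]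
    calc T = (Complex.exp ((a:ℂ) * (ξ:ℂ)) * Complex.exp (-((a:ℂ) * (ξ:ℂ)))) * T := by
          rw [hE, one_mul]
      _ = Complex.exp ((a:ℂ) * (ξ:ℂ)) * (Complex.exp (-((a:ℂ) * (ξ:ℂ))) * T) := by ring
      _ = Complex.exp ((a:ℂ) * (ξ:ℂ)) *
            (RamanujanAux.f a (Real.exp ξ) * (2*(π:ℂ) * Complex.Gamma (2*(a:ℂ)))) := by
          rw [hstep]
      _ = 2*(π:ℂ) * Complex.Gamma (2*(a:ℂ)) * Complex.exp ((a:ℂ) * (ξ:ℂ)) *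
            RamanujanAux.f a (Real.exp ξ) := by ring
  · -- the duplication identity
    rw [RamanujanAux.dup a]
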